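/- arXiv:2206.06557 — 5 statements merged into one kernel-verified Lean document; each statement's English description precedes it below -/
import Mathlib

section
/- Let C_A and C_B be classical codes in 𝔽₂ⁿ each of minimum distance at least d, and let C = C_A ⊗ 𝔽₂ⁿ + 𝔽₂ⁿ ⊗ C_A be their dual tensor code. Suppose X ∈ C is supported on the union of α nonzero rows and β nonzero columns, with α, β < d. Then X can be written as X = r + c where r ∈ 𝔽₂ⁿ ⊗ C_B is supported on at most α nonzero rows and c ∈ C_A ⊗ 𝔽₂ⁿ is supported on at most β nonzero columns. -/
def hw {n : ℕ} (x : Fin n → ZMod 2) : ℕ :=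
  (Finset.univ.filter fun i => x i ≠ 0).card

def colCode {m n : ℕ} (C : Submodule (ZMod 2) (Fin m → ZMod 2)) :
    Submodule (ZMod 2) (Matrix (Fin m) (Fin n) (ZMod 2)) where
  carrier := {X | ∀ j, (fun i => X i j) ∈ C}
  add_mem' := by
    intro X Y hX hY j
    have h : (fun i => (X + Y) i j) = (fun i => X i j) + (fun i => Y i j) := by
      funext i; simp [Matrix.add_apply]
    rw [h]; exact C.add_mem (hX j) (hY j)
  zero_mem' := by
    intro j
    have h : (fun i => (0 : Matrix (Fin m) (Fin n) (ZMod 2)) i j) = (0 : Fin m → ZMod 2) := by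
      funext i; simp
    rw [h]; exact C.zero_mem
  smul_mem' := by
    intro c X hX j
    have h : (fun i => (c • X) i j) = c • (fun i => X i j) := by
      funext i; simp [Matrix.smul_apply]
    rw [h]; exact C.smul_mem c (hX j)

def rowCode {m n : ℕ} (C : Submodule (ZMod 2) (Fin n → ZMod 2)) :
    Submodule (ZMod 2) (Matrix (Fin m) (Fin n) (ZMod 2)) where
  carrier := {X | ∀ i, (fun j => X i j) ∈ C}
  add_mem' := by
    intro X Y hX hY i
    have h : (fun j => (X + Y) i j) = (fun j => X i j) + (fun j => Y i j) := by
      funext j; simp [Matrix.add_apply]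
    rw [h]; exact C.add_mem (hX i) (hY i)
  zero_mem' := by
    intro i
    have h : (fun j => (0 : Matrix (Fin m) (Fin n) (ZMod 2)) i j) = (0 : Fin n → ZMod 2) := by
      funext j; simp
    rw [h]; exact C.zero_mem
  smul_mem' := by
    intro c X hX i
    have h : (fun j => (c • X) i j) = c • (fun j => X i j) := by
      funext j; simp [Matrix.smul_apply]
    rw [h]; exact C.smul_mem c (hX i)


lemma supp_zero {n d : ℕ} (C : Submodule (ZMod 2) (Fin n → ZMod 2))
    (hd : ∀ x ∈ C, x ≠ 0 → d ≤ hw x) (S : Finset (Fin n)) (hS : S.card < d)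
    {x : Fin n → ZMod 2} (hx : x ∈ C) (h : ∀ k, k ∉ S → x k = 0) : x = 0 := by
  by_contra hne
  have h1 := hd x hx hne
  have h2 : (Finset.univ.filter fun i => x i ≠ 0) ⊆ S := by
    intro k hk
    simp only [Finset.mem_filter] at hk
    by_contra hkS; exact hk.2 (h k hkS)
  have h3 := Finset.card_le_card h2
  unfold hw at h1; omega

def maskL {n : ℕ} (S : Finset (Fin n)) :
    (Fin n → ZMod 2) →ₗ[ZMod 2] (Fin n → ZMod 2) where
  toFun x := fun k => if k ∈ S then 0 else x k
  map_add' := by intro x y; funext k; by_cases h : k ∈ S <;> simp [h]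
  map_smul' := by intro c x; funext k; by_cases h : k ∈ S <;> simp [h]

lemma zmod2_add_eq_zero : ∀ a b : ZMod 2, a + b = 0 → a = b := by decide

/-- Row-column decomposition: a dual tensor codeword supported on fewer than `d`
nonzero rows and columns decomposes as `r + c` respecting the supports. -/
theorem rowcol_decomposition (n d : ℕ)
    (CA CB : Submodule (ZMod 2) (Fin n → ZMod 2))
    (hdA : ∀ x ∈ CA, x ≠ 0 → d ≤ hw x)
    (hdB : ∀ x ∈ CB, x ≠ 0 → d ≤ hw x)
    (X : Matrix (Fin n) (Fin n) (ZMod 2))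
    (hX : X ∈ colCode CA ⊔ rowCode CB)
    (α β : ℕ) (hα : α < d) (hβ : β < d)
    (Sr Sc : Finset (Fin n)) (hSr : Sr.card = α) (hSc : Sc.card = β)
    (hsupp : ∀ i j, i ∉ Sr → j ∉ Sc → X i j = 0) :
    ∃ r c : Matrix (Fin n) (Fin n) (ZMod 2),
      r ∈ rowCode CB ∧ c ∈ colCode CA ∧ X = r + c ∧
      (∀ i, i ∉ Sr → ∀ j, r i j = 0) ∧
      (∀ j, j ∉ Sc → ∀ i, c i j = 0) := by
  obtain ⟨A, hA, B, hB, hAB⟩ := Submodule.mem_sup.mp hX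
  have hA' : ∀ j, (fun i => A i j) ∈ CA := hA
  have hB' : ∀ i, (fun j => B i j) ∈ CB := hB
  set ρ : (Fin n → ZMod 2) →ₗ[ZMod 2] (Fin n → ZMod 2) := maskL Sr with hρ
  have hρapp : ∀ (x : Fin n → ZMod 2) k, k ∉ Sr → ρ x k = x k := by
    intro x k hk; simp [hρ, maskL, hk]
  have hρker : ∀ x ∈ CA, ρ x = 0 → x = 0 := by
    intro x hx h0
    apply supp_zero CA hdA Sr (by omega : Sr.card < d) hx
    intro k hk
    have := congrFun h0 k
    rwa [hρapp x k hk] at this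
  set ρ' : CA →ₗ[ZMod 2] (Fin n → ZMod 2) := ρ.comp CA.subtype with hρ'
  have hinj : Function.Injective ρ' := by
    intro a b hab
    have hsub : ((a : Fin n → ZMod 2) - b) ∈ CA := sub_mem a.2 b.2
    have h0 : ρ ((a : Fin n → ZMod 2) - b) = 0 := by
      rw [map_sub]
      have : ρ (a : Fin n → ZMod 2) = ρ (b : Fin n → ZMod 2) := hab
      rw [this, sub_self]
    exact Subtype.ext (sub_eq_zero.mp (hρker _ hsub h0))
  set e := LinearEquiv.ofInjective ρ' hinj with he
  obtain ⟨q, hq⟩ := Submodule.exists_isCompl (LinearMap.range ρ')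
  set φ : (Fin n → ZMod 2) →ₗ[ZMod 2] (Fin n → ZMod 2) :=
    CA.subtype ∘ₗ (e.symm.toLinearMap ∘ₗ
      ((LinearMap.range ρ').projectionOnto q hq)) with hφ
  set T : (Fin n → ZMod 2) →ₗ[ZMod 2] (Fin n → ZMod 2) := φ ∘ₗ ρ with hT
  have keyT : ∀ x, x ∈ CA → T x = x := by
    intro x hx
    show φ (ρ x) = x
    have h1 : ρ x = ↑(e ⟨x, hx⟩) := by
      rw [he, LinearEquiv.ofInjective_apply]; rfl
    rw [h1]
    show CA.subtype (e.symm ((LinearMap.range ρ').projectionOnto q hq ↑(e ⟨x, hx⟩))) = x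
    rw [Submodule.linearProjOfIsCompl_apply_left hq (e ⟨x, hx⟩),
      LinearEquiv.symm_apply_apply]
    rfl
  have rangeT : ∀ y, T y ∈ CA := by
    intro y
    show CA.subtype (e.symm ((LinearMap.range ρ').projectionOnto q hq (ρ y))) ∈ CA
    exact Submodule.coe_mem _
  set Tm := LinearMap.toMatrix' T with hTmdef
  have hTm : ∀ v, Tm.mulVec v = T v := by
    intro v
    rw [hTmdef, ← Matrix.toLin'_apply, Matrix.toLin'_toMatrix']
  set M := Tm * B with hM
  have hMcol : ∀ j, (fun i => M i j) = T (fun k => B k j) := by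
    intro j
    rw [← hTm]
    funext i
    simp [hM, Matrix.mul_apply, Matrix.mulVec, dotProduct]
  have hMrow : ∀ i, (fun j => M i j) ∈ CB := by
    intro i
    have hrow : (fun j => M i j) = ∑ k, Tm i k • (fun j => B k j) := by
      funext j
      simp [hM, Matrix.mul_apply, Finset.sum_apply, smul_eq_mul]
    rw [hrow]
    exact Submodule.sum_mem _ fun k _ => Submodule.smul_mem _ _ (hB' k)
  have hcolEq : ∀ j, j ∉ Sc → ∀ i, M i j = A i j := by
    intro j hj
    have hABj : ρ (fun k => B k j) = ρ (fun k => A k j) := by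
      funext k
      by_cases hk : k ∈ Sr
      · simp [hρ, maskL, hk]
      · rw [hρapp _ k hk, hρapp _ k hk]
        have hX0 : A k j + B k j = 0 := by
          have := congrFun (congrFun hAB k) j
          simp only [Matrix.add_apply] at this
          rw [this]; exact hsupp k j hk hj
        exact (zmod2_add_eq_zero _ _ (by rw [add_comm] at hX0; exact hX0))
    have : T (fun k => B k j) = (fun i => A i j) := by
      show φ (ρ (fun k => B k j)) = _
      rw [hABj]
      exact keyT _ (hA' j)
    intro i
    have := congrFun ((hMcol j).trans this) i
    exact this
  refine ⟨B + M, A - M, ?_, ?_, ?_, ?_, ?_⟩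
  · intro i
    have : (fun j => (B + M) i j) = (fun j => B i j) + (fun j => M i j) := by
      funext j; simp [Matrix.add_apply]
    rw [this]
    exact CB.add_mem (hB' i) (hMrow i)
  · intro j
    have : (fun i => (A - M) i j) = (fun i => A i j) - (fun i => M i j) := by
      funext i; simp [Matrix.sub_apply]
    rw [this]
    exact CA.sub_mem (hA' j) (by rw [hMcol j]; exact rangeT _)
  · rw [← hAB]; abel
  · intro i hi
    have hrmem : (fun j => (B + M) i j) ∈ CB := by
      have : (fun j => (B + M) i j) = (fun j => B i j) + (fun j => M i j) := by
        funext j; simp [Matrix.add_apply]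
      rw [this]
      exact CB.add_mem (hB' i) (hMrow i)
    have hzero : ∀ j, j ∉ Sc → (B + M) i j = 0 := by
      intro j hj
      have h1 : (B + M) i j = B i j + A i j := by
        simp [Matrix.add_apply, hcolEq j hj i]
      rw [h1, add_comm]
      have := congrFun (congrFun hAB i) j
      simp only [Matrix.add_apply] at this
      rw [this]
      exact hsupp i j hi hj
    have := supp_zero CB hdB Sc (by omega : Sc.card < d) hrmem hzero
    intro j
    exact congrFun this j
  · intro j hj i
    simp [Matrix.sub_apply, hcolEq j hj i]
end

section
/- Let C_A, C_B ⊆ 𝔽₂ⁿ be codes with distances d_A, d_B whose dual tensor code is w-robust for some w ≤ d_A d_B / 2. Then for every x ∈ 𝔽₂^{n×n} with d(x, C_A⊗𝔽₂ⁿ) + d(x, 𝔽₂ⁿ⊗C_B) ≤ w, we have d(x, C_A ⊗ C_B) ≤ (3/2)·(d(x, C_A⊗𝔽₂ⁿ) + d(x, 𝔽₂ⁿ⊗C_B)). -/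
def mw {m n : ℕ} (X : Matrix (Fin m) (Fin n) (ZMod 2)) : ℕ :=
  (Finset.univ.filter fun p : Fin m × Fin n => X p.1 p.2 ≠ 0).card

def isMinDist {n : ℕ} (C : Submodule (ZMod 2) (Fin n → ZMod 2)) (d : ℕ) : Prop :=
  (∀ x ∈ C, x ≠ 0 → d ≤ hw x) ∧ ∃ x ∈ C, x ≠ 0 ∧ hw x = d

/-- The dual tensor code of `C_A, C_B` is `w`-robust: every codeword of weight at most `w`
is supported on at most `|X|/d_A` nonzero columns and `|X|/d_B` nonzero rows. -/
def wRobust {n : ℕ} (CA CB : Submodule (ZMod 2) (Fin n → ZMod 2)) (dA dB w : ℕ) : Prop :=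
  ∀ X ∈ colCode CA ⊔ rowCode CB, mw X ≤ w →
    ∃ R Cl : Finset (Fin n),
      R.card * dB ≤ mw X ∧ Cl.card * dA ≤ mw X ∧
      ∀ i j, i ∉ R → j ∉ Cl → X i j = 0

/-- Distance from a matrix to a set (code) of matrices. -/
noncomputable def mdist {m n : ℕ} (x : Matrix (Fin m) (Fin n) (ZMod 2))
    (C : Submodule (ZMod 2) (Matrix (Fin m) (Fin n) (ZMod 2))) : ℕ :=
  sInf {k | ∃ y ∈ C, mw (x - y) = k}

section Aux

open Finset

/-- Vectors supported inside a finset. -/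
def suppIn {n : ℕ} (S : Finset (Fin n)) : Submodule (ZMod 2) (Fin n → ZMod 2) where
  carrier := {v | ∀ i ∉ S, v i = 0}
  add_mem' := by
    intro u v hu hv i hi
    simp [hu i hi, hv i hi]
  zero_mem' := by intro i _; rfl
  smul_mem' := by
    intro c v hv i hi
    simp [hv i hi]

lemma hw_le_card {n : ℕ} (v : Fin n → ZMod 2) (S : Finset (Fin n))
    (h : ∀ i ∉ S, v i = 0) : hw v ≤ S.card := by
  apply Finset.card_le_card
  intro i hi
  simp only [Finset.mem_filter, Finset.mem_univ, true_and] at hi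
  by_contra hiS
  exact hi (h i hiS)

lemma mw_sub_le {m n : ℕ} (U V : Matrix (Fin m) (Fin n) (ZMod 2)) :
    mw (U - V) ≤ mw U + mw V := by
  classical
  refine le_trans (Finset.card_le_card ?_) (Finset.card_union_le _ _)
  intro p hp
  simp only [Finset.mem_filter, Finset.mem_univ, true_and, Finset.mem_union] at hp ⊢
  by_contra h
  push_neg at h
  exact hp (by simp [Matrix.sub_apply, h.1, h.2])

lemma mw_add_le {m n : ℕ} (U V : Matrix (Fin m) (Fin n) (ZMod 2)) :
    mw (U + V) ≤ mw U + mw V := by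
  classical
  refine le_trans (Finset.card_le_card ?_) (Finset.card_union_le _ _)
  intro p hp
  simp only [Finset.mem_filter, Finset.mem_univ, true_and, Finset.mem_union] at hp ⊢
  by_contra h
  push_neg at h
  exact hp (by simp [Matrix.add_apply, h.1, h.2])

lemma mw_swap {m n : ℕ} (U V : Matrix (Fin m) (Fin n) (ZMod 2)) :
    mw (U - V) = mw (V - U) := by
  unfold mw
  congr 1
  apply Finset.filter_congr
  intro p _
  have : ∀ u v : ZMod 2, (u - v ≠ 0) ↔ (v - u ≠ 0) := by decide
  simpa [Matrix.sub_apply] using this (U p.1 p.2) (V p.1 p.2)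

/-- Applying a linear map to each column of a matrix whose rows lie in `CB`
produces a matrix whose rows still lie in `CB`. -/
lemma rows_lin {n : ℕ} (CB : Submodule (ZMod 2) (Fin n → ZMod 2))
    (b : Matrix (Fin n) (Fin n) (ZMod 2)) (hb : ∀ i, (fun j => b i j) ∈ CB)
    (p : (Fin n → ZMod 2) →ₗ[ZMod 2] (Fin n → ZMod 2)) (i : Fin n) :
    (fun j => p (fun k => b k j) i) ∈ CB := by
  have key : (fun j => p (fun k => b k j) i)
      = ∑ k : Fin n, (p (fun t => if k = t then 1 else 0) i) • (fun j => b k j) := by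
    funext j
    have hcol : (fun k => b k j)
        = ∑ k : Fin n, b k j • (fun t => if k = t then (1 : ZMod 2) else 0) :=
      pi_eq_sum_univ _
    rw [hcol, map_sum]
    simp only [Finset.sum_apply, Pi.smul_apply, map_smul, smul_eq_mul]
    exact Finset.sum_congr rfl fun k _ => mul_comm _ _
  rw [key]
  exact Submodule.sum_mem _ fun k _ => Submodule.smul_mem _ _ (hb k)

end Aux

/-- Robustness implies robust testability of the tensor code
(`d(x, C_A⊗C_B) ≤ (3/2)(d(x,C_A⊗𝔽₂ⁿ) + d(x,𝔽₂ⁿ⊗C_B))`). -/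
theorem robustness_testability (n dA dB w : ℕ)
    (CA CB : Submodule (ZMod 2) (Fin n → ZMod 2))
    (hdA : isMinDist CA dA) (hdB : isMinDist CB dB)
    (hw' : 2 * w ≤ dA * dB)
    (hrob : wRobust CA CB dA dB w)
    (x : Matrix (Fin n) (Fin n) (ZMod 2))
    (hx : mdist x (colCode CA) + mdist x (rowCode CB) ≤ w) :
    2 * mdist x (colCode CA ⊓ rowCode CB) ≤
      3 * (mdist x (colCode CA) + mdist x (rowCode CB)) := by
  classical
  -- the distances are achieved
  obtain ⟨a, haC, haE⟩ : ∃ y ∈ colCode (n := n) CA, mw (x - y) = mdist x (colCode CA) := by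
    have hne : {k | ∃ y ∈ colCode (n := n) CA, mw (x - y) = k}.Nonempty :=
      ⟨mw (x - 0), 0, Submodule.zero_mem _, rfl⟩
    exact Nat.sInf_mem hne
  obtain ⟨b, hbC, hbE⟩ : ∃ y ∈ rowCode (m := n) CB, mw (x - y) = mdist x (rowCode CB) := by
    have hne : {k | ∃ y ∈ rowCode (m := n) CB, mw (x - y) = k}.Nonempty :=
      ⟨mw (x - 0), 0, Submodule.zero_mem _, rfl⟩
    exact Nat.sInf_mem hne
  set ρA := mdist x (colCode CA) with hρA
  set ρB := mdist x (rowCode CB) with hρB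
  have haCj : ∀ j, (fun i => a i j) ∈ CA := haC
  have hbCi : ∀ i, (fun j => b i j) ∈ CB := hbC
  -- positivity of the distances
  have hdApos : 1 ≤ dA := by
    obtain ⟨y, _, hy0, hyw⟩ := hdA.2
    obtain ⟨i, hi⟩ := Function.ne_iff.mp hy0
    rw [← hyw]
    exact Finset.card_pos.mpr ⟨i, by
      simp only [Finset.mem_filter, Finset.mem_univ, true_and]
      simpa using hi⟩
  have hdBpos : 1 ≤ dB := by
    obtain ⟨y, _, hy0, hyw⟩ := hdB.2
    obtain ⟨i, hi⟩ := Function.ne_iff.mp hy0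
    rw [← hyw]
    exact Finset.card_pos.mpr ⟨i, by
      simp only [Finset.mem_filter, Finset.mem_univ, true_and]
      simpa using hi⟩
  -- the difference a - b
  set X : Matrix (Fin n) (Fin n) (ZMod 2) := a - b with hXdef
  have hXmem : X ∈ colCode CA ⊔ rowCode CB :=
    Submodule.sub_mem _ (Submodule.mem_sup_left haC) (Submodule.mem_sup_right hbC)
  have hXle : mw X ≤ ρA + ρB := by
    have h1 : X = (a - x) + (x - b) := by rw [hXdef]; abel
    calc mw X ≤ mw (a - x) + mw (x - b) := by rw [h1]; exact mw_add_le _ _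
      _ = ρA + ρB := by rw [mw_swap, haE, hbE]
  have hXw : mw X ≤ w := le_trans hXle hx
  obtain ⟨R, Cl, hRcard, hClcard, hsupp⟩ := hrob X hXmem hXw
  -- size bounds on R and Cl
  have hRdA : 2 * R.card ≤ dA := by
    have h1 : (2 * R.card) * dB ≤ dA * dB := by
      calc (2 * R.card) * dB = 2 * (R.card * dB) := by ring
        _ ≤ 2 * w := by omega
        _ ≤ dA * dB := hw'
    exact Nat.le_of_mul_le_mul_right h1 (by omega)
  have hCldB : 2 * Cl.card ≤ dB := by
    have h1 : (2 * Cl.card) * dA ≤ dB * dA := by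
      calc (2 * Cl.card) * dA = 2 * (Cl.card * dA) := by ring
        _ ≤ 2 * w := by omega
        _ ≤ dA * dB := hw'
        _ = dB * dA := by ring
    exact Nat.le_of_mul_le_mul_right h1 (by omega)
  have hRlt : R.card < dA := by omega
  have hCllt : Cl.card < dB := by omega
  have hRC : 2 * (R.card * Cl.card) ≤ mw X := by
    have h1 : (2 * (R.card * Cl.card)) * (dA * dB) ≤ (mw X * (dA * dB)) := by
      calc (2 * (R.card * Cl.card)) * (dA * dB)
          = 2 * ((R.card * dB) * (Cl.card * dA)) := by ring
        _ ≤ 2 * (mw X * mw X) := by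
            exact Nat.mul_le_mul_left 2 (Nat.mul_le_mul hRcard hClcard)
        _ = mw X * (2 * mw X) := by ring
        _ ≤ mw X * (2 * w) := Nat.mul_le_mul_left _ (by omega)
        _ ≤ mw X * (dA * dB) := Nat.mul_le_mul_left _ hw'
    exact Nat.le_of_mul_le_mul_right h1 (by positivity)
  -- the submodule of vectors supported in R
  set V : Submodule (ZMod 2) (Fin n → ZMod 2) := suppIn R with hVdef
  have hVmem : ∀ v : Fin n → ZMod 2, v ∈ V ↔ ∀ i ∉ R, v i = 0 := fun v => Iff.rfl
  have hCAV : ∀ v, v ∈ CA → v ∈ V → v = 0 := by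
    intro v hvA hvV
    by_contra hne
    have h1 : dA ≤ hw v := hdA.1 v hvA hne
    have h2 : hw v ≤ R.card := hw_le_card v R hvV
    omega
  -- complement of CA ⊔ V
  obtain ⟨U, hU⟩ := Submodule.exists_isCompl (CA ⊔ V)
  -- IsCompl V (CA ⊔ U)
  have hdisj : Disjoint V (CA ⊔ U) := by
    rw [Submodule.disjoint_def]
    intro v hv hvK
    obtain ⟨c, hc, u, hu, hcu⟩ := Submodule.mem_sup.mp hvK
    have huW : u ∈ CA ⊔ V := by
      have hueq : u = v - c := by rw [← hcu]; abel
      rw [hueq]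
      exact Submodule.sub_mem _ (Submodule.mem_sup_right hv) (Submodule.mem_sup_left hc)
    have hu0 : u = 0 := (Submodule.disjoint_def.mp hU.disjoint) u huW hu
    have hvc : v = c := by rw [← hcu, hu0, add_zero]
    exact hCAV v (hvc ▸ hc) hv
  have hcodis : Codisjoint V (CA ⊔ U) := by
    rw [codisjoint_iff, ← sup_assoc, sup_comm V CA]
    exact codisjoint_iff.mp hU.codisjoint
  have hcompl : IsCompl V (CA ⊔ U) := ⟨hdisj, hcodis⟩
  -- the projection onto V killing CA
  set P : (Fin n → ZMod 2) →ₗ[ZMod 2] (Fin n → ZMod 2) :=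
    V.subtype.comp (V.projectionOnto (CA ⊔ U) hcompl) with hPdef
  have hPv : ∀ v ∈ V, P v = v := by
    intro v hv
    have := Submodule.projectionOnto_apply_left hcompl ⟨v, hv⟩
    simpa [hPdef] using congrArg (Submodule.subtype V) this
  have hPc : ∀ c ∈ CA, P c = 0 := by
    intro c hc
    have := Submodule.projectionOnto_apply_of_mem_right hcompl (Submodule.mem_sup_left hc)
    simp [hPdef, this]
  have hPmem : ∀ y, P y ∈ V := fun y => SetLike.coe_mem _
  -- the projection onto U detecting membership in CA ⊔ V
  set Q : (Fin n → ZMod 2) →ₗ[ZMod 2] (Fin n → ZMod 2) :=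
    U.subtype.comp (U.projectionOnto (CA ⊔ V) hU.symm) with hQdef
  have hQW : ∀ y ∈ CA ⊔ V, Q y = 0 := by
    intro y hy
    have := Submodule.projectionOnto_apply_of_mem_right hU.symm hy
    simp [hQdef, this]
  have hQW' : ∀ y, Q y = 0 → y ∈ CA ⊔ V := by
    intro y hy
    have h0 : U.projectionOnto (CA ⊔ V) hU.symm y = 0 := by
      have : (U.projectionOnto (CA ⊔ V) hU.symm y : Fin n → ZMod 2) = 0 := hy
      exact Subtype.ext this
    exact (Submodule.projectionOnto_apply_eq_zero_iff hU.symm).mp h0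
  -- columns of X off Cl are supported in R
  have hXcolV : ∀ j ∉ Cl, (fun i => X i j) ∈ V := by
    intro j hj i hi
    exact hsupp i j hi hj
  -- every column of b lies in CA ⊔ V
  have hbW : ∀ j, (fun i => b i j) ∈ CA ⊔ V := by
    have hoff : ∀ j ∉ Cl, (fun i => b i j) ∈ CA ⊔ V := by
      intro j hj
      have heq : (fun i => b i j) = (fun i => a i j) - (fun i => X i j) := by
        funext i
        simp [hXdef, Matrix.sub_apply]
      rw [heq]
      exact Submodule.sub_mem _ (Submodule.mem_sup_left (haCj j))
        (Submodule.mem_sup_right (hXcolV j hj))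
    intro j
    have hrows : ∀ i, (fun j' => Q (fun k => b k j') i) = 0 := by
      intro i
      have hmem : (fun j' => Q (fun k => b k j') i) ∈ CB := rows_lin CB b hbCi Q i
      by_contra hne
      have hge : dB ≤ hw (fun j' => Q (fun k => b k j') i) := hdB.1 _ hmem hne
      have hle : hw (fun j' => Q (fun k => b k j') i) ≤ Cl.card := by
        apply hw_le_card
        intro j' hj'
        have : Q (fun k => b k j') = 0 := hQW _ (hoff j' hj')
        exact congrFun this i
      omega
    apply hQW'
    funext i
    exact congrFun (hrows i) j
  -- Z : the rowCode part, supported in rows R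
  set Z : Matrix (Fin n) (Fin n) (ZMod 2) := fun i j => P (fun k => b k j) i with hZdef
  have hZrow : ∀ i, (fun j => Z i j) ∈ CB := fun i => rows_lin CB b hbCi P i
  have hZsupp : ∀ i ∉ R, ∀ j, Z i j = 0 := by
    intro i hi j
    exact (hPmem (fun k => b k j)) i hi
  -- Y : the colCode part, supported in columns Cl
  set Y : Matrix (Fin n) (Fin n) (ZMod 2) := X - Z with hYdef
  have hYcol : ∀ j, (fun i => Y i j) ∈ CA := by
    intro j
    obtain ⟨c, hc, v, hv, hcv⟩ := Submodule.mem_sup.mp (hbW j)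
    have hPb : P (fun k => b k j) = v := by
      rw [← hcv, map_add, hPc c hc, hPv v hv, zero_add]
    have heq : (fun i => Y i j) = (fun i => a i j) - c := by
      funext i
      have hb' : b i j = c i + v i := (congrFun hcv i).symm
      have hz : Z i j = v i := congrFun hPb i
      show X i j - Z i j = a i j - c i
      rw [hz]
      show a i j - b i j - v i = a i j - c i
      rw [hb']
      have : ∀ p' q' r' : ZMod 2, p' - (q' + r') - r' = p' - q' := by decide
      exact this _ _ _
    rw [heq]
    exact CA.sub_mem (haCj j) hc
  have hYoff : ∀ j ∉ Cl, ∀ i, Y i j = 0 := by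
    intro j hj i
    have hbc : (fun i' => b i' j) = (fun i' => a i' j) - (fun i' => X i' j) := by
      funext i'
      simp [hXdef, Matrix.sub_apply]
    have hPb : P (fun k => b k j) = 0 - (fun i' => X i' j) := by
      rw [hbc, map_sub, hPc _ (haCj j), hPv _ (hXcolV j hj)]
    have hz : Z i j = 0 - X i j := congrFun hPb i
    show X i j - Z i j = 0
    rw [hz]
    have : ∀ u : ZMod 2, u - (0 - u) = 0 := by decide
    exact this _
  -- the candidate codeword
  set c' : Matrix (Fin n) (Fin n) (ZMod 2) := a - Y with hc'def
  have hc'eq : c' = b + Z := by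
    funext i j
    show a i j - (X i j - Z i j) = b i j + Z i j
    show a i j - ((a i j - b i j) - Z i j) = b i j + Z i j
    ring
  have hc'col : c' ∈ colCode CA := by
    intro j
    have heq : (fun i => c' i j) = (fun i => a i j) - (fun i => Y i j) := by
      funext i; rfl
    rw [heq]
    exact CA.sub_mem (haCj j) (hYcol j)
  have hc'row : c' ∈ rowCode CB := by
    rw [hc'eq]
    intro i
    have heq : (fun j => (b + Z) i j) = (fun j => b i j) + (fun j => Z i j) := by
      funext j; rfl
    rw [heq]
    exact CB.add_mem (hbCi i) (hZrow i)
  have hc'mem : c' ∈ colCode CA ⊓ rowCode CB := Submodule.mem_inf.mpr ⟨hc'col, hc'row⟩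
  -- distance bound
  have hdle : mdist x (colCode CA ⊓ rowCode CB) ≤ mw (x - c') :=
    Nat.sInf_le ⟨c', hc'mem, rfl⟩
  have hb1 : mw (x - c') ≤ ρA + mw Y := by
    have h1 : x - c' = (x - a) + Y := by rw [hc'def]; abel
    calc mw (x - c') ≤ mw (x - a) + mw Y := by rw [h1]; exact mw_add_le _ _
      _ = ρA + mw Y := by rw [haE]
  have hb2 : mw (x - c') ≤ ρB + mw Z := by
    have h1 : x - c' = (x - b) - Z := by rw [hc'eq]; abel
    calc mw (x - c') ≤ mw (x - b) + mw Z := by rw [h1]; exact mw_sub_le _ _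
      _ = ρB + mw Z := by rw [hbE]
  -- weight count for Y and Z
  have hcount : mw Y + mw Z ≤ mw X + 2 * (R.card * Cl.card) := by
    set SX := Finset.univ.filter fun p : Fin n × Fin n => X p.1 p.2 ≠ 0 with hSX
    set SY := Finset.univ.filter fun p : Fin n × Fin n => Y p.1 p.2 ≠ 0 with hSY
    set SZ := Finset.univ.filter fun p : Fin n × Fin n => Z p.1 p.2 ≠ 0 with hSZ
    set T := R ×ˢ Cl with hT
    have hYmemT : ∀ p : Fin n × Fin n, Y p.1 p.2 ≠ 0 → p.2 ∈ Cl := by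
      intro p hp
      by_contra h
      exact hp (hYoff p.2 h p.1)
    have hZmemT : ∀ p : Fin n × Fin n, Z p.1 p.2 ≠ 0 → p.1 ∈ R := by
      intro p hp
      by_contra h
      exact hp (hZsupp p.1 h p.2)
    have hYsub : SY ⊆ SX ∪ T := by
      intro p hp
      simp only [hSY, Finset.mem_filter, Finset.mem_univ, true_and] at hp
      simp only [Finset.mem_union, hSX, hT, Finset.mem_filter, Finset.mem_univ, true_and,
        Finset.mem_product]
      by_cases hpR : p.1 ∈ R
      · exact Or.inr ⟨hpR, hYmemT p hp⟩
      · left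
        have hz : Z p.1 p.2 = 0 := hZsupp p.1 hpR p.2
        have : Y p.1 p.2 = X p.1 p.2 := by
          show X p.1 p.2 - Z p.1 p.2 = X p.1 p.2
          rw [hz, sub_zero]
        rwa [this] at hp
    have hZsub : SZ ⊆ SX ∪ T := by
      intro p hp
      simp only [hSZ, Finset.mem_filter, Finset.mem_univ, true_and] at hp
      simp only [Finset.mem_union, hSX, hT, Finset.mem_filter, Finset.mem_univ, true_and,
        Finset.mem_product]
      by_cases hpCl : p.2 ∈ Cl
      · exact Or.inr ⟨hZmemT p hp, hpCl⟩
      · left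
        have hy : Y p.1 p.2 = 0 := hYoff p.2 hpCl p.1
        have hy' : X p.1 p.2 - Z p.1 p.2 = 0 := hy
        have : Z p.1 p.2 = X p.1 p.2 := (sub_eq_zero.mp hy').symm
        rwa [this] at hp
    have hinter : SY ∩ SZ ⊆ T := by
      intro p hp
      simp only [Finset.mem_inter, hSY, hSZ, Finset.mem_filter, Finset.mem_univ, true_and] at hp
      simp only [hT, Finset.mem_product]
      exact ⟨hZmemT p hp.2, hYmemT p hp.1⟩
    have hcardT : T.card = R.card * Cl.card := Finset.card_product R Cl
    have h1 : SY.card + SZ.card = (SY ∪ SZ).card + (SY ∩ SZ).card :=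
      (Finset.card_union_add_card_inter SY SZ).symm
    have h2 : (SY ∪ SZ).card ≤ (SX ∪ T).card :=
      Finset.card_le_card (Finset.union_subset hYsub hZsub)
    have h3 : (SX ∪ T).card ≤ SX.card + T.card := Finset.card_union_le _ _
    have h4 : (SY ∩ SZ).card ≤ T.card := Finset.card_le_card hinter
    have hmwY : mw Y = SY.card := rfl
    have hmwZ : mw Z = SZ.card := rfl
    have hmwX : mw X = SX.card := rfl
    omega
  omega
end

section
/- Let Y ∈ 𝔽₂^{Δ×Δ'} be a fixed matrix of rank M, and let H ∈ 𝔽₂^{m×Δ} be a uniformly random binary matrix. Then for any integer K ≥ 0, the probability that rank(HY) = K is at most C(M,K) · 2^{-(m-K)(M-K)}. -/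
open Matrix Finset Submodule

lemma card_comp_hom {G G' : Type*} [AddCommGroup G] [AddCommGroup G']
    (f : G →+ G') (hf : Function.Surjective f) (p : G' → Prop) :
    Nat.card {x : G // p (f x)} = Nat.card {y : G' // p y} * Nat.card f.ker := by
  rw [← Nat.card_prod]
  refine Nat.card_congr ?_
  have hs : ∀ y, f (Function.surjInv hf y) = y := Function.surjInv_eq hf
  exact
    { toFun := fun x => (⟨f x.1, x.2⟩, ⟨x.1 - Function.surjInv hf (f x.1), by
        simp [AddMonoidHom.mem_ker, map_sub, hs]⟩)
      invFun := fun yk => ⟨yk.2.1 + Function.surjInv hf yk.1.1, by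
        have h0 : f yk.2.1 = 0 := yk.2.2
        simpa [map_add, h0, hs] using yk.1.2⟩
      left_inv := fun x => by ext; simp
      right_inv := fun yk => by
        have h0 : f yk.2.1 = 0 := yk.2.2
        ext <;> simp [map_add, h0, hs] }

lemma arith_aux (m M K : ℕ) (h1 : K ≤ m) (h2 : K ≤ M) :
    m * K + K * (M - K) + (m - K) * (M - K) = m * M := by
  obtain ⟨a, rfl⟩ := Nat.exists_eq_add_of_le h1
  obtain ⟨c, rfl⟩ := Nat.exists_eq_add_of_le h2
  simp only [Nat.add_sub_cancel_left]
  ring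

lemma card_mat_aux (m n : ℕ) : Nat.card (Matrix (Fin m) (Fin n) (ZMod 2)) = 2 ^ (m * n) := by
  simp only [Nat.card_eq_fintype_card]
  simp [Matrix]
  convert (show Fintype.card (Fin m → Fin n → ZMod 2) = 2 ^ (m * n) by
    rw [Fintype.card_fun, Fintype.card_fun, ZMod.card, Fintype.card_fin, Fintype.card_fin]; ring) using 2
  exact Fintype.card_congr (Equiv.refl _)

lemma count_rank_eq (m M K : ℕ) :
    Nat.card {A : Matrix (Fin m) (Fin M) (ZMod 2) // A.rank = K} ≤
      M.choose K * 2 ^ (m * K + K * (M - K)) := by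
  classical
  set P : Finset (Fin M) → Matrix (Fin m) (Fin M) (ZMod 2) → Prop :=
    fun S A => ∀ j, Aᵀ j ∈ Submodule.span (ZMod 2) (Aᵀ '' ↑S) with hPdef
  have cover : ∀ A : Matrix (Fin m) (Fin M) (ZMod 2), A.rank = K →
      ∃ S ∈ Finset.powersetCard K (Finset.univ : Finset (Fin M)), P S A := by
    intro A hA
    have hKM : K ≤ M := hA ▸ (A.rank_le_card_width.trans (by simp))
    have hrank : Module.finrank (ZMod 2) (Submodule.span (ZMod 2) (Set.range Aᵀ)) = K := by
      rw [← hA, Matrix.rank_eq_finrank_span_cols]; rfl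
    obtain ⟨s, hsub, hspan, hind⟩ := exists_linearIndependent (ZMod 2) (Set.range Aᵀ)
    have hsfin : s.Finite := (Set.finite_range Aᵀ).subset hsub
    haveI := hsfin.fintype
    have hcard : s.toFinset.card = K := by
      rw [← finrank_span_set_eq_card hind, hspan, hrank]
    set g : {v // v ∈ hsfin.toFinset} → Fin M := fun v =>
      (hsub (by simpa using v.2) : v.1 ∈ Set.range Aᵀ).choose with hg
    have hgspec : ∀ v : {v // v ∈ hsfin.toFinset}, Aᵀ (g v) = v.1 := fun v =>
      (hsub (by simpa using v.2) : v.1 ∈ Set.range Aᵀ).choose_spec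
    set S₀ : Finset (Fin M) := hsfin.toFinset.attach.image g with hS₀
    have hS₀card : S₀.card ≤ K := by
      calc S₀.card ≤ hsfin.toFinset.attach.card := Finset.card_image_le
        _ = hsfin.toFinset.card := Finset.card_attach
        _ = K := by rw [Set.Finite.card_toFinset]; simpa using hcard
    obtain ⟨S, hS₀S, hScard⟩ := Finset.exists_superset_card_eq hS₀card (by simpa using hKM)
    refine ⟨S, by simp [Finset.mem_powersetCard, hScard], ?_⟩
    intro j
    have h1 : Aᵀ j ∈ Submodule.span (ZMod 2) s := by
      rw [hspan]; exact subset_span ⟨j, rfl⟩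
    refine Submodule.span_mono ?_ h1
    intro v hv
    refine ⟨g ⟨v, by simpa using hv⟩, ?_, hgspec _⟩
    exact hS₀S (Finset.mem_image.2 ⟨⟨v, by simpa using hv⟩, Finset.mem_attach _ _, rfl⟩)
  have count : ∀ S : Finset (Fin M), S.card = K →
      (Finset.univ.filter (fun A : Matrix (Fin m) (Fin M) (ZMod 2) => P S A)).card
        ≤ 2 ^ (m * K) * 2 ^ (K * (M - K)) := by
    intro S hS
    set Ψ : (({i : Fin M // i ∈ S} → Fin m → ZMod 2) ×
      ({j : Fin M // j ∉ S} → {i : Fin M // i ∈ S} → ZMod 2)) → Matrix (Fin m) (Fin M) (ZMod 2) := fun fg =>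
      Matrix.of fun d j => if h : j ∈ S then fg.1 ⟨j, h⟩ d
        else ∑ i : {i : Fin M // i ∈ S}, fg.2 ⟨j, h⟩ i * fg.1 i d with hΨ
    have hsurj : ∀ A, P S A → ∃ fg, Ψ fg = A := by
      intro A hA
      have hcoef : ∀ j : {j : Fin M // j ∉ S}, ∃ c : {i : Fin M // i ∈ S} → ZMod 2,
          ∑ i, c i • Aᵀ i.1 = Aᵀ j.1 := by
        intro j
        have h2 := hA j.1
        have him : Aᵀ '' ↑S = Set.range (fun i : {i : Fin M // i ∈ S} => Aᵀ i.1) := by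
          ext v; simp [Set.mem_image, Set.mem_range, Subtype.exists]; exact Iff.rfl
        rw [him] at h2
        exact (mem_span_range_iff_exists_fun _).1 h2
      refine ⟨⟨fun i d => A d i.1, fun j i => (hcoef j).choose i⟩, ?_⟩
      ext d j
      by_cases h : j ∈ S
      · simp [hΨ, h]
      · have hc := congrFun ((hcoef ⟨j, h⟩).choose_spec) d
        simp only [Finset.sum_apply, Pi.smul_apply, smul_eq_mul, transpose_apply] at hc
        simpa [hΨ, h] using hc
    have hsub : (Finset.univ.filter (fun A : Matrix (Fin m) (Fin M) (ZMod 2) => P S A)) ⊆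
        Finset.univ.image Ψ := by
      intro A hA
      obtain ⟨fg, hfg⟩ := hsurj A (Finset.mem_filter.1 hA).2
      exact Finset.mem_image.2 ⟨fg, Finset.mem_univ _, hfg⟩
    calc _ ≤ (Finset.univ.image Ψ).card := Finset.card_le_card hsub
      _ ≤ Fintype.card (({i : Fin M // i ∈ S} → Fin m → ZMod 2) ×
            ({j : Fin M // j ∉ S} → {i : Fin M // i ∈ S} → ZMod 2)) := by
          rw [← Finset.card_univ]; exact Finset.card_image_le
      _ = 2 ^ (m * K) * 2 ^ (K * (M - K)) := by
          have h1 : Fintype.card {i : Fin M // i ∈ S} = K := by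
            simpa using hS
          have h2 : Fintype.card {j : Fin M // j ∉ S} = M - K := by
            rw [Fintype.card_subtype_compl, h1, Fintype.card_fin]
          rw [Fintype.card_prod, Fintype.card_fun, Fintype.card_fun, Fintype.card_fun,
            h1, h2, ZMod.card, Fintype.card_fin, Fintype.card_fun]
          rw [h1, ZMod.card]
          ring
  rw [Nat.card_eq_fintype_card, Fintype.card_subtype]
  have hsub : Finset.univ.filter (fun A : Matrix (Fin m) (Fin M) (ZMod 2) => A.rank = K) ⊆
      (Finset.powersetCard K (Finset.univ : Finset (Fin M))).biUnion
        (fun S => Finset.univ.filter (fun A => P S A)) := by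
    intro A hA
    obtain ⟨S, hS1, hS2⟩ := cover A (Finset.mem_filter.1 hA).2
    exact Finset.mem_biUnion.2 ⟨S, hS1, Finset.mem_filter.2 ⟨Finset.mem_univ _, hS2⟩⟩
  calc _ ≤ _ := Finset.card_le_card hsub
    _ ≤ ∑ S ∈ Finset.powersetCard K (Finset.univ : Finset (Fin M)),
          (Finset.univ.filter (fun A => P S A)).card := Finset.card_biUnion_le
    _ ≤ ∑ S ∈ Finset.powersetCard K (Finset.univ : Finset (Fin M)),
          2 ^ (m * K) * 2 ^ (K * (M - K)) := by
        refine Finset.sum_le_sum fun S hS => count S ?_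
        exact (Finset.mem_powersetCard.1 hS).2
    _ = M.choose K * 2 ^ (m * K + K * (M - K)) := by
        rw [Finset.sum_const, Finset.card_powersetCard, Finset.card_univ, Fintype.card_fin,
          smul_eq_mul, pow_add]

/-- For fixed `Y` of rank `M` and uniformly random `H ∈ 𝔽₂^{m×Δ}`,
`Pr(rank(HY) = K) ≤ C(M,K)·2^{-(m-K)(M-K)}`. -/
theorem prob_rank_mul (Δ Δ' m : ℕ) (Y : Matrix (Fin Δ) (Fin Δ') (ZMod 2))
    (M K : ℕ) (hY : Y.rank = M) :
    (Nat.card {H : Matrix (Fin m) (Fin Δ) (ZMod 2) // (H * Y).rank = K} : ℝ) /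
      (Nat.card (Matrix (Fin m) (Fin Δ) (ZMod 2)) : ℝ) ≤
      (M.choose K : ℝ) * (2 : ℝ) ^ (-(((m : ℤ) - K) * ((M : ℤ) - K))) := by
  classical
  have hTpos : (0:ℝ) < (Nat.card (Matrix (Fin m) (Fin Δ) (ZMod 2)) : ℝ) := by
    rw [card_mat_aux]; positivity
  have hRHS : (0:ℝ) ≤ (M.choose K : ℝ) * (2 : ℝ) ^ (-(((m : ℤ) - K) * ((M : ℤ) - K))) := by
    positivity
  by_cases hKM : K ≤ M
  swap
  · have hE : IsEmpty {H : Matrix (Fin m) (Fin Δ) (ZMod 2) // (H * Y).rank = K} := by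
      refine ⟨fun H => ?_⟩
      have h1 : (H.1 * Y).rank ≤ M := hY ▸ Matrix.rank_mul_le_right H.1 Y
      have h2 := H.2
      omega
    rw [Nat.card_of_isEmpty]
    simpa using hRHS
  by_cases hKm : K ≤ m
  swap
  · have hE : IsEmpty {H : Matrix (Fin m) (Fin Δ) (ZMod 2) // (H * Y).rank = K} := by
      refine ⟨fun H => ?_⟩
      have h1 : (H.1 * Y).rank ≤ m := Matrix.rank_le_height (H.1 * Y)
      have h2 := H.2
      omega
    rw [Nat.card_of_isEmpty]
    simpa using hRHS
  -- main case
  -- construct B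
  set W := LinearMap.range (Matrix.mulVecLin Y) with hW
  have hWfin : Module.finrank (ZMod 2) W = M := hY
  let β : Module.Basis (Fin M) (ZMod 2) W := Module.finBasisOfFinrankEq _ _ hWfin
  set b : Fin M → (Fin Δ → ZMod 2) := fun i => (β i : Fin Δ → ZMod 2) with hb
  have hbspan : Submodule.span (ZMod 2) (Set.range b) = W := by
    have : Set.range b = W.subtype '' (Set.range β) := by
      ext v; simp [hb, Set.mem_image, Set.mem_range]
    rw [this, ← Submodule.map_span, β.span_eq, Submodule.map_top, Submodule.range_subtype]
  have hbind : LinearIndependent (ZMod 2) b :=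
    β.linearIndependent.map' W.subtype (Submodule.ker_subtype W)
  set B : Matrix (Fin Δ) (Fin M) (ZMod 2) := (Matrix.of fun i j => b i j)ᵀ with hBdef
  have hBrange : LinearMap.range (Matrix.mulVecLin B) = W := by
    rw [hBdef, Matrix.range_mulVecLin, ← hbspan]
    rfl
  have hBker : LinearMap.ker (Matrix.mulVecLin B) = ⊥ := by
    have hmv : ∀ x : Fin M → ZMod 2,
        Matrix.mulVecLin B x = ∑ i, x i • b i := by
      intro x
      ext d
      simp [hBdef, Matrix.mulVecLin_apply, Matrix.mulVec_transpose, Matrix.vecMul,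
        dotProduct, Finset.sum_apply, mul_comm]
    rw [eq_bot_iff]
    intro x hx
    have h0 : ∑ i, x i • b i = 0 := by
      rw [← hmv x]; exact hx
    exact funext (Fintype.linearIndependent_iff.1 hbind x h0)
  -- rank equality
  have hrankeq : ∀ H : Matrix (Fin m) (Fin Δ) (ZMod 2), (H * Y).rank = (H * B).rank := by
    intro H
    unfold Matrix.rank
    rw [Matrix.mulVecLin_mul, Matrix.mulVecLin_mul, LinearMap.range_comp, LinearMap.range_comp,
      hBrange, ← hW]
  -- surjection
  obtain ⟨L, hL⟩ := LinearMap.exists_leftInverse_of_injective (Matrix.mulVecLin B) hBker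
  set φ : Matrix (Fin m) (Fin Δ) (ZMod 2) →+ Matrix (Fin m) (Fin M) (ZMod 2) :=
    { toFun := fun H => H * B
      map_zero' := by simp
      map_add' := fun H1 H2 => Matrix.add_mul H1 H2 B } with hφ
  have hLB : (LinearMap.toMatrix' L) * B = 1 := by
    apply Matrix.toLin'.injective
    rw [Matrix.toLin'_mul, Matrix.toLin'_toMatrix', Matrix.toLin'_one]
    rw [Matrix.toLin'_apply']
    exact hL
  have hφsurj : Function.Surjective φ := by
    intro A
    refine ⟨A * (LinearMap.toMatrix' L), ?_⟩
    show A * (LinearMap.toMatrix' L) * B = A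
    rw [Matrix.mul_assoc, hLB, Matrix.mul_one]
  have key1 := card_comp_hom φ hφsurj (fun A => A.rank = K)
  have key2 := card_comp_hom φ hφsurj (fun _ => True)
  have hnum : Nat.card {H : Matrix (Fin m) (Fin Δ) (ZMod 2) // (H * Y).rank = K}
      = Nat.card {A : Matrix (Fin m) (Fin M) (ZMod 2) // A.rank = K} * Nat.card φ.ker := by
    rw [← key1]
    exact Nat.card_congr (Equiv.subtypeEquivRight fun H => by
      simp only [hφ, AddMonoidHom.coe_mk, ZeroHom.coe_mk]
      exact ⟨fun h => (hrankeq H) ▸ h, fun h => (hrankeq H).symm ▸ h⟩)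
  have hden : Nat.card (Matrix (Fin m) (Fin Δ) (ZMod 2))
      = Nat.card (Matrix (Fin m) (Fin M) (ZMod 2)) * Nat.card φ.ker := by
    have e1 : Nat.card {x : Matrix (Fin m) (Fin Δ) (ZMod 2) // True}
        = Nat.card (Matrix (Fin m) (Fin Δ) (ZMod 2)) :=
      Nat.card_congr (Equiv.subtypeUnivEquiv fun _ => trivial)
    have e2 : Nat.card {y : Matrix (Fin m) (Fin M) (ZMod 2) // True}
        = Nat.card (Matrix (Fin m) (Fin M) (ZMod 2)) :=
      Nat.card_congr (Equiv.subtypeUnivEquiv fun _ => trivial)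
    rw [← e1, ← e2]
    exact key2
  have hkk : 0 < Nat.card φ.ker := Nat.card_pos
  -- final computation
  set N := Nat.card {A : Matrix (Fin m) (Fin M) (ZMod 2) // A.rank = K} with hN
  have hNbound : N * 2 ^ ((m - K) * (M - K)) ≤ M.choose K * 2 ^ (m * M) := by
    calc N * 2 ^ ((m - K) * (M - K))
        ≤ (M.choose K * 2 ^ (m * K + K * (M - K))) * 2 ^ ((m - K) * (M - K)) :=
          Nat.mul_le_mul_right _ (count_rank_eq m M K)
      _ = M.choose K * 2 ^ (m * M) := by
          rw [mul_assoc, ← pow_add, arith_aux m M K hKm hKM]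
  rw [hnum, hden, card_mat_aux]
  push_cast
  have hzpow : (2:ℝ) ^ (-(((m : ℤ) - K) * ((M : ℤ) - K))) = ((2:ℝ) ^ ((m - K) * (M - K)))⁻¹ := by
    rw [_root_.zpow_neg, ← zpow_natCast]
    congr 1
    push_cast [Nat.cast_sub hKm, Nat.cast_sub hKM]
    ring
  have hNR : (N:ℝ) * 2 ^ ((m - K) * (M - K)) ≤ (M.choose K : ℝ) * 2 ^ (m * M) := by
    exact_mod_cast hNbound
  have h2e : (0:ℝ) < 2 ^ ((m - K) * (M - K)) := by positivity
  have hkk0 : (0:ℝ) ≤ (Nat.card φ.ker : ℝ) := by positivity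
  rw [hzpow, div_le_iff₀ (by positivity)]
  calc (N:ℝ) * (Nat.card φ.ker : ℝ)
      ≤ ((M.choose K : ℝ) * 2 ^ (m * M) / 2 ^ ((m - K) * (M - K))) * (Nat.card φ.ker : ℝ) :=
        mul_le_mul_of_nonneg_right ((le_div_iff₀ h2e).2 hNR) hkk0
    _ = (M.choose K : ℝ) * ((2:ℝ) ^ ((m - K) * (M - K)))⁻¹ * (2 ^ (m * M) * (Nat.card φ.ker : ℝ)) := by
        ring
end

section
/- Generic iterative decoding lemma: Let 𝒞 be an [[n,k,d]] CSS code with classical codes 𝒞_X, 𝒞_Z ⊆ 𝔽₂ⁿ, and let U : 𝔽₂ⁿ → ℤ_{≥0} be a potential function that is constant on cosets of 𝒞_X, satisfies U(e)=0 iff e ∈ 𝒞_X, and U(e) ≤ s|e| for all e. Suppose an iterative decoder, given the syndrome of any nonzero Z error of weight less than αd (α<1), can strictly decrease U by flipping a set of at most c bits. Then starting from any error e with |e| < αd/(1+sc), repeated application terminates with a total accumulated error e_J such that e_J ∈ 𝒞_Z^⊥, i.e., the decoder corrects e up to stabilizer. -/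
def dualCode {n : ℕ} (C : Submodule (ZMod 2) (Fin n → ZMod 2)) :
    Submodule (ZMod 2) (Fin n → ZMod 2) where
  carrier := {y | ∀ x ∈ C, ∑ i, x i * y i = 0}
  add_mem' := by
    intro a b ha hb x hx
    have h1 := ha x hx
    have h2 := hb x hx
    calc ∑ i, x i * (a + b) i = ∑ i, (x i * a i + x i * b i) := by
          apply Finset.sum_congr rfl; intro i _; simp [mul_add]
      _ = (∑ i, x i * a i) + ∑ i, x i * b i := Finset.sum_add_distrib
      _ = 0 := by rw [h1, h2]; ring
  zero_mem' := by intro x hx; simp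
  smul_mem' := by
    intro c a ha x hx
    have h1 := ha x hx
    calc ∑ i, x i * (c • a) i = c * ∑ i, x i * a i := by
          rw [Finset.mul_sum]; apply Finset.sum_congr rfl; intro i _
          simp only [Pi.smul_apply, smul_eq_mul]; ring
      _ = 0 := by rw [h1]; ring


lemma hw_add_le {n : ℕ} (a b : Fin n → ZMod 2) : hw (a + b) ≤ hw a + hw b := by
  classical
  unfold hw
  refine le_trans (Finset.card_le_card ?_) (Finset.card_union_le _ _)
  intro i hi
  simp only [Finset.mem_filter, Finset.mem_union, Finset.mem_univ, true_and] at hi ⊢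
  by_contra h
  push_neg at h
  simp [Pi.add_apply, h.1, h.2] at hi

lemma key_lemma (n : ℕ) (α dr : ℝ) (c : ℕ)
    (CX : Submodule (ZMod 2) (Fin n → ZMod 2))
    (U : (Fin n → ZMod 2) → ℕ)
    (hU0 : ∀ e, U e = 0 ↔ e ∈ CX)
    (hstep : ∀ e, e ∉ CX → (hw e : ℝ) < α * dr →
      ∃ z, hw z ≤ c ∧ U (e + z) < U e) :
    ∀ m : ℕ, ∀ e, U e ≤ m → (hw e : ℝ) + c * U e < α * dr →
      ∃ (J : ℕ) (seq : ℕ → (Fin n → ZMod 2)),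
        seq 0 = e ∧
        (∀ i < J, hw (seq (i + 1) - seq i) ≤ c ∧ U (seq (i + 1)) < U (seq i)) ∧
        seq J ∈ CX ∧ (hw (seq J) : ℝ) < α * dr := by
  intro m
  induction m with
  | zero =>
    intro e hUe hbound
    refine ⟨0, fun _ => e, rfl, by intro i hi; omega, ?_, ?_⟩
    · exact (hU0 e).1 (Nat.le_zero.mp hUe)
    · have : (0:ℝ) ≤ c * U e := by positivity
      linarith
  | succ m ih =>
    intro e hUe hbound
    by_cases hmem : e ∈ CX
    · refine ⟨0, fun _ => e, rfl, by intro i hi; omega, hmem, ?_⟩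
      have : (0:ℝ) ≤ c * U e := by positivity
      linarith
    · have hUpos : 1 ≤ U e := by
        rcases Nat.eq_zero_or_pos (U e) with h | h
        · exact absurd ((hU0 e).1 h) hmem
        · exact h
      have hwlt : (hw e : ℝ) < α * dr := by
        have : (0:ℝ) ≤ c * U e := by positivity
        linarith
      obtain ⟨z, hz, hUz⟩ := hstep e hmem hwlt
      have hUz' : U (e + z) ≤ m := by omega
      have hbound' : (hw (e + z) : ℝ) + c * U (e + z) < α * dr := by
        have h1 : (hw (e + z) : ℝ) ≤ hw e + c := by
          have := hw_add_le e z
          have : hw (e + z) ≤ hw e + c := by omega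
          exact_mod_cast this
        have h2 : (c : ℝ) * U (e + z) ≤ c * (U e - 1) := by
          have hle : (U (e + z) : ℝ) ≤ (U e : ℝ) - 1 := by
            have : U (e + z) + 1 ≤ U e := hUz
            have := (Nat.cast_le (α := ℝ)).2 this
            push_cast at this
            linarith
          have hc0 : (0:ℝ) ≤ (c:ℕ) := by positivity
          nlinarith
        nlinarith
      obtain ⟨J', seq', h0', hstep', hmem', hw'⟩ := ih (e + z) hUz' hbound'
      refine ⟨J' + 1, fun i => if i = 0 then e else seq' (i - 1), by simp, ?_, ?_, ?_⟩
      · intro i hi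
        rcases Nat.eq_zero_or_pos i with rfl | hipos
        · simp only [if_pos rfl, Nat.add_sub_cancel, if_neg (Nat.one_ne_zero)]
          rw [h0']
          constructor
          · simp only [if_true]
            have : e + z - e = z := by abel
            rw [this]; exact hz
          · exact hUz
        · have hi1 : i + 1 ≠ 0 := by omega
          have hi0 : i ≠ 0 := by omega
          simp only [if_neg hi1, if_neg hi0]
          have : i - 1 < J' := by omega
          have := hstep' (i - 1) this
          have heq : i - 1 + 1 = i + 1 - 1 := by omega
          rwa [heq] at this
      · simpa using hmem'
      · simpa using hw'

/-- Generic iterative potential-based decoding lemma: if a decoder can always strictly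
decrease the potential of a nonzero error of weight `< αd` by flipping at most `c` bits,
then any error of weight `< αd/(1+sc)` is corrected up to stabilizer. -/
theorem iterative_decoder_correctness (n d : ℕ) (α s : ℝ) (c : ℕ)
    (CX CZ : Submodule (ZMod 2) (Fin n → ZMod 2))
    (hcss : dualCode CZ ≤ CX)
    (hα : α < 1) (hs : 0 < s) (hc : 0 < c)
    (U : (Fin n → ZMod 2) → ℕ)
    (hUcoset : ∀ e x, x ∈ CX → U (e + x) = U e)
    (hU0 : ∀ e, U e = 0 ↔ e ∈ CX)
    (hUs : ∀ e, (U e : ℝ) ≤ s * hw e)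
    (hd : ∀ x ∈ CX, (hw x : ℝ) < d → x ∈ dualCode CZ)
    (hstep : ∀ e, e ∉ CX → (hw e : ℝ) < α * d →
      ∃ z, hw z ≤ c ∧ U (e + z) < U e)
    (e : Fin n → ZMod 2) (he : (hw e : ℝ) < α * d / (1 + s * c)) :
    ∃ (J : ℕ) (seq : ℕ → (Fin n → ZMod 2)),
      seq 0 = e ∧
      (∀ i < J, hw (seq (i + 1) - seq i) ≤ c ∧ U (seq (i + 1)) < U (seq i)) ∧
      seq J ∈ dualCode CZ := by
  classical
  have h1sc : (0:ℝ) < 1 + s * c := by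
    have : (0:ℝ) ≤ s * c := by positivity
    linarith
  have hwnn : (0:ℝ) ≤ hw e := by positivity
  have had : (0:ℝ) < α * d := by
    by_contra h
    push_neg at h
    have : α * d / (1 + s * c) ≤ 0 := div_nonpos_of_nonpos_of_nonneg h h1sc.le
    linarith
  have hdpos : (0:ℝ) < d := by
    by_contra h
    push_neg at h
    have hd0 : (d:ℝ) = 0 := le_antisymm h (by positivity)
    rw [hd0] at had; linarith
  have hαd : α * d < d := by nlinarith
  have hbound : (hw e : ℝ) + c * U e < α * d := by
    have h2 : (hw e : ℝ) * (1 + s * c) < α * d := by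
      rw [← lt_div_iff₀ h1sc] at *
      linarith [he]
    have h3 : (c:ℝ) * U e ≤ c * (s * hw e) := by
      have := hUs e
      have hc0 : (0:ℝ) ≤ c := by positivity
      nlinarith
    nlinarith
  obtain ⟨J, seq, h0, hsteps, hmemJ, hwJ⟩ :=
    key_lemma n α d c CX U hU0 hstep (U e) e le_rfl hbound
  refine ⟨J, seq, h0, hsteps, ?_⟩
  exact hd (seq J) hmemJ (lt_trans hwJ hαd)
end

section
/- Let C_A, C_B ⊆ 𝔽₂^Δ be linear codes each of minimum distance at least δΔ, and let γ ∈ (0,1). Suppose X is a codeword of the dual tensor code C_A ⊗ 𝔽₂^Δ + 𝔽₂^Δ ⊗ C_B such that every row and column of X has Hamming weight at most Δ^{1/2+2ε}, X is supported on the union of at most γδΔ nonzero rows and at most γδΔ nonzero columns, and Δ^{1/2+2ε} < (1−γ)δΔ. Then X = 0. -/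
section Aux

open Finset

lemma hw_sub_le {n : ℕ} (x y : Fin n → ZMod 2) : hw (x - y) ≤ hw x + hw y := by
  classical
  refine le_trans (Finset.card_le_card ?_) (Finset.card_union_le _ _)
  intro i hi
  simp only [Finset.mem_filter, Finset.mem_univ, true_and, Finset.mem_union] at *
  by_contra h
  push_neg at h
  exact hi (by simp [Pi.sub_apply, h.1, h.2])

/-- Zeroing out the coordinates in `S`, as a linear map. -/
def mask {n : ℕ} (S : Finset (Fin n)) :
    (Fin n → ZMod 2) →ₗ[ZMod 2] (Fin n → ZMod 2) where
  toFun v := fun i => if i ∈ S then 0 else v i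
  map_add' := by intro x y; funext i; by_cases h : i ∈ S <;> simp [h]
  map_smul' := by intro c x; funext i; by_cases h : i ∈ S <;> simp [h]

lemma mask_apply {n : ℕ} (S : Finset (Fin n)) (v : Fin n → ZMod 2) (i : Fin n) :
    mask S v i = if i ∈ S then 0 else v i := rfl

/-- Lifting lemma: a matrix whose columns lie in the `Sr`-masked image of `CA` and whose rows
lie in the `Sc`-masked image of `CB` agrees, outside `Sr × Sc`, with a matrix whose columns are
in `CA` and whose rows are in `CB`. -/
lemma exists_lift {Δ : ℕ} (CA CB : Submodule (ZMod 2) (Fin Δ → ZMod 2))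
    (Sr Sc : Finset (Fin Δ)) (Z : Matrix (Fin Δ) (Fin Δ) (ZMod 2))
    (hcols : ∀ j, (fun i => Z i j) ∈ CA.map (mask Sr))
    (hrows : ∀ i, (fun j => Z i j) ∈ CB.map (mask Sc)) :
    ∃ T : Matrix (Fin Δ) (Fin Δ) (ZMod 2),
      (∀ j, (fun i => T i j) ∈ CA) ∧ (∀ i, (fun j => T i j) ∈ CB) ∧
      (∀ i j, i ∉ Sr → j ∉ Sc → T i j = Z i j) := by
  classical
  set W : Submodule (ZMod 2) (Fin Δ → ZMod 2) :=
    Submodule.span (ZMod 2) (Set.range fun j => (fun i => Z i j)) with hW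
  have hWle : W ≤ CA.map (mask Sr) := by
    rw [hW, Submodule.span_le]
    rintro _ ⟨j, rfl⟩; exact hcols j
  have hmem : ∀ j, (fun i => Z i j) ∈ W := fun j =>
    Submodule.subset_span ⟨j, rfl⟩
  let b := Module.Free.chooseBasis (ZMod 2) W
  set ι := Module.Free.ChooseBasisIndex (ZMod 2) W with hι
  have hext : ∀ k : ι, ∃ g : (Fin Δ → ZMod 2) →ₗ[ZMod 2] ZMod 2,
      ∀ w : W, g w = b.repr w k := by
    intro k
    obtain ⟨g, hg⟩ := LinearMap.exists_extend
      ((Finsupp.lapply k).comp (b.repr.toLinearMap))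
    exact ⟨g, fun w => by simpa using LinearMap.congr_fun hg w⟩
  choose g hg using hext
  set wv : ι → (Fin Δ → ZMod 2) := fun k => fun j => g k (fun i => Z i j) with hwv
  have hwmem : ∀ k, wv k ∈ CB.map (mask Sc) := by
    intro k
    have hrep : wv k = ∑ i : Fin Δ,
        (g k (fun i' => if i = i' then 1 else 0)) • (fun j => Z i j) := by
      funext j
      have h1 := LinearMap.pi_apply_eq_sum_univ (g k) (fun i => Z i j)
      simp only [hwv, h1, Finset.sum_apply, Pi.smul_apply, smul_eq_mul]
      exact Finset.sum_congr rfl fun i _ => mul_comm _ _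
    rw [hrep]
    exact Submodule.sum_mem _ fun i _ => Submodule.smul_mem _ _ (hrows i)
  have hlu : ∀ k : ι, ∃ u, u ∈ CA ∧ mask Sr u = (b k : Fin Δ → ZMod 2) := by
    intro k
    obtain ⟨u, hu, he⟩ := hWle (b k).2
    exact ⟨u, hu, he⟩
  choose uh huA hue using hlu
  have hlw : ∀ k : ι, ∃ w, w ∈ CB ∧ mask Sc w = wv k := by
    intro k; obtain ⟨w, hwm, he⟩ := hwmem k; exact ⟨w, hwm, he⟩
  choose wh hwB hwe using hlw
  refine ⟨fun i j => ∑ k : ι, uh k i * wh k j, ?_, ?_, ?_⟩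
  · intro j
    have he : (fun i => ∑ k : ι, uh k i * wh k j) = ∑ k : ι, (wh k j) • uh k := by
      funext i
      simp only [Finset.sum_apply, Pi.smul_apply, smul_eq_mul]
      exact Finset.sum_congr rfl fun k _ => mul_comm _ _
    rw [he]
    exact Submodule.sum_mem _ fun k _ => Submodule.smul_mem _ _ (huA k)
  · intro i
    have he : (fun j => ∑ k : ι, uh k i * wh k j) = ∑ k : ι, (uh k i) • wh k := by
      funext j
      simp only [Finset.sum_apply, Pi.smul_apply, smul_eq_mul]
    rw [he]
    exact Submodule.sum_mem _ fun k _ => Submodule.smul_mem _ _ (hwB k)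
  · intro i j hi hj
    have h1 : ∀ k, uh k i = (b k : Fin Δ → ZMod 2) i := by
      intro k
      have := congrFun (hue k) i
      simpa [mask_apply, hi] using this
    have h2 : ∀ k, wh k j = wv k j := by
      intro k
      have := congrFun (hwe k) j
      simpa [mask_apply, hj] using this
    have h3 : ∀ k, wv k j = b.repr ⟨fun i => Z i j, hmem j⟩ k := fun k =>
      hg k ⟨fun i => Z i j, hmem j⟩
    have hsum : ((∑ k : ι, (b.repr ⟨fun i => Z i j, hmem j⟩ k) • (b k) : W) :
        Fin Δ → ZMod 2) = fun i => Z i j := by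
      rw [b.sum_repr ⟨fun i => Z i j, hmem j⟩]
    calc ∑ k : ι, uh k i * wh k j
        = ∑ k : ι, (b.repr ⟨fun i => Z i j, hmem j⟩ k) • ((b k : Fin Δ → ZMod 2) i) := by
          refine Finset.sum_congr rfl fun k _ => ?_
          rw [h1 k, h2 k, h3 k, smul_eq_mul, mul_comm]
      _ = Z i j := by
          have h4 := congrFun hsum i
          rw [← h4]
          rw [Submodule.coe_sum]
          simp [Finset.sum_apply]

end Aux
/-- A sparse dual tensor codeword supported on at most `γδΔ` nonzero rows and at most
`γδΔ` nonzero columns must vanish, provided `Δ^{1/2+2ε} < (1−γ)δΔ`. -/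
theorem sparse_small_support_vanishes (Δ : ℕ) (ε δ γ : ℝ)
    (hε : 0 < ε) (hδ0 : 0 < δ) (hδ1 : δ < 1) (hγ0 : 0 < γ) (hγ1 : γ < 1)
    (CA CB : Submodule (ZMod 2) (Fin Δ → ZMod 2))
    (hdA : ∀ x ∈ CA, x ≠ 0 → δ * Δ ≤ (hw x : ℝ))
    (hdB : ∀ x ∈ CB, x ≠ 0 → δ * Δ ≤ (hw x : ℝ))
    (X : Matrix (Fin Δ) (Fin Δ) (ZMod 2))
    (hX : X ∈ colCode CA ⊔ rowCode CB)
    (hrow : ∀ i, ((Finset.univ.filter fun j => X i j ≠ 0).card : ℝ) ≤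
      (Δ : ℝ) ^ ((1 : ℝ) / 2 + 2 * ε))
    (hcol : ∀ j, ((Finset.univ.filter fun i => X i j ≠ 0).card : ℝ) ≤
      (Δ : ℝ) ^ ((1 : ℝ) / 2 + 2 * ε))
    (hsupp : ∃ Sr Sc : Finset (Fin Δ),
      (Sr.card : ℝ) ≤ γ * δ * Δ ∧ (Sc.card : ℝ) ≤ γ * δ * Δ ∧
      ∀ i j, i ∉ Sr → j ∉ Sc → X i j = 0)
    (hgap : (Δ : ℝ) ^ ((1 : ℝ) / 2 + 2 * ε) < (1 - γ) * δ * Δ) :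
    X = 0 := by
  classical
  obtain ⟨Sr, Sc, hSr, hSc, h0⟩ := hsupp
  obtain ⟨A, hA, B, hB, hAB⟩ := Submodule.mem_sup.mp hX
  have hA' : ∀ j, (fun i => A i j) ∈ CA := hA
  have hB' : ∀ i, (fun j => B i j) ∈ CB := hB
  set w : ℝ := (Δ : ℝ) ^ ((1 : ℝ) / 2 + 2 * ε) with hwdef
  have hw0 : 0 ≤ w := Real.rpow_nonneg (Nat.cast_nonneg Δ) _
  have hΔpos : (0 : ℝ) < Δ := by
    nlinarith [lt_of_le_of_lt hw0 hgap,
      mul_pos (show (0:ℝ) < 1 - γ by linarith) hδ0]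
  have hδΔ : 0 < δ * (Δ : ℝ) := mul_pos hδ0 hΔpos
  have hγδΔ : γ * δ * (Δ : ℝ) < δ * Δ := by nlinarith
  have hwγ : w + γ * δ * (Δ : ℝ) < δ * Δ := by nlinarith
  have hwδ : w < δ * (Δ : ℝ) := by nlinarith
  have keyA : ∀ v, v ∈ CA → (hw v : ℝ) < δ * Δ → v = 0 := by
    intro v hv hlt
    by_contra hne
    exact absurd (hdA v hv hne) (not_le.mpr hlt)
  have keyB : ∀ v, v ∈ CB → (hw v : ℝ) < δ * Δ → v = 0 := by
    intro v hv hlt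
    by_contra hne
    exact absurd (hdB v hv hne) (not_le.mpr hlt)
  -- the off-support part of A
  set Z : Matrix (Fin Δ) (Fin Δ) (ZMod 2) :=
    fun i j => if i ∈ Sr ∨ j ∈ Sc then 0 else A i j with hZ
  have hXzero : ∀ i j, i ∉ Sr → j ∉ Sc → A i j = -(B i j) := by
    intro i j hi hj
    have h1 : A i j + B i j = X i j := by rw [← hAB]; rfl
    rw [h0 i j hi hj] at h1
    exact eq_neg_of_add_eq_zero_left h1
  have hcolsZ : ∀ j, (fun i => Z i j) ∈ CA.map (mask Sr) := by
    intro j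
    by_cases hj : j ∈ Sc
    · have he : (fun i => Z i j) = 0 := by
        funext i; simp [hZ, hj]
      rw [he]; exact Submodule.zero_mem _
    · have he : (fun i => Z i j) = mask Sr (fun i => A i j) := by
        funext i
        by_cases hi : i ∈ Sr <;> simp [hZ, mask_apply, hi, hj]
      rw [he]
      exact Submodule.mem_map_of_mem (hA' j)
  have hrowsZ : ∀ i, (fun j => Z i j) ∈ CB.map (mask Sc) := by
    intro i
    by_cases hi : i ∈ Sr
    · have he : (fun j => Z i j) = 0 := by
        funext j; simp [hZ, hi]
      rw [he]; exact Submodule.zero_mem _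
    · have he : (fun j => Z i j) = mask Sc (-(fun j => B i j)) := by
        funext j
        by_cases hj : j ∈ Sc
        · simp [hZ, mask_apply, hi, hj]
        · simp [hZ, mask_apply, hi, hj, hXzero i j hi hj]
      rw [he]
      exact Submodule.mem_map_of_mem (CB.neg_mem (hB' i))
  obtain ⟨T, hTc, hTr, hTZ⟩ := exists_lift CA CB Sr Sc Z hcolsZ hrowsZ
  -- adjusted decomposition
  set A2 : Matrix (Fin Δ) (Fin Δ) (ZMod 2) := A - T with hA2def
  set B2 : Matrix (Fin Δ) (Fin Δ) (ZMod 2) := B + T with hB2def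
  have hA2 : ∀ j, (fun i => A2 i j) ∈ CA := by
    intro j
    have he : (fun i => A2 i j) = (fun i => A i j) - (fun i => T i j) := by
      funext i; simp [hA2def, Matrix.sub_apply]
    rw [he]; exact Submodule.sub_mem _ (hA' j) (hTc j)
  have hB2 : ∀ i, (fun j => B2 i j) ∈ CB := by
    intro i
    have he : (fun j => B2 i j) = (fun j => B i j) + (fun j => T i j) := by
      funext j; simp [hB2def, Matrix.add_apply]
    rw [he]; exact Submodule.add_mem _ (hB' i) (hTr i)
  have hXA2B2 : ∀ i j, X i j = A2 i j + B2 i j := by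
    intro i j
    have h1 : A i j + B i j = X i j := by rw [← hAB]; rfl
    simp [hA2def, hB2def, Matrix.sub_apply, Matrix.add_apply]
    linear_combination (norm := ring_nf) -h1
  have hA2zero : ∀ i j, i ∉ Sr → j ∉ Sc → A2 i j = 0 := by
    intro i j hi hj
    have h1 : T i j = A i j := by
      rw [hTZ i j hi hj]; simp [hZ, hi, hj]
    simp [hA2def, Matrix.sub_apply, h1]
  -- columns of A2 outside Sc vanish
  have hA2col : ∀ j, j ∉ Sc → ∀ i, A2 i j = 0 := by
    intro j hj
    have hzero : (fun i => A2 i j) = 0 := by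
      refine keyA _ (hA2 j) ?_
      have hsub : (Finset.univ.filter fun i => A2 i j ≠ 0) ⊆ Sr := by
        intro i hi
        rw [Finset.mem_filter] at hi
        by_contra hiSr
        exact hi.2 (hA2zero i j hiSr hj)
      have hcard : (hw (fun i => A2 i j) : ℝ) ≤ (Sr.card : ℝ) := by
        exact_mod_cast Finset.card_le_card hsub
      calc (hw (fun i => A2 i j) : ℝ) ≤ (Sr.card : ℝ) := hcard
        _ ≤ γ * δ * Δ := hSr
        _ < δ * Δ := hγδΔ
    intro i; exact congrFun hzero i
  -- rows of A2 have support in Sc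
  have hA2row : ∀ i, (hw (fun j => A2 i j) : ℝ) ≤ γ * δ * Δ := by
    intro i
    have hsub : (Finset.univ.filter fun j => A2 i j ≠ 0) ⊆ Sc := by
      intro j hj
      rw [Finset.mem_filter] at hj
      by_contra hjSc
      exact hj.2 (hA2col j hjSc i)
    calc (hw (fun j => A2 i j) : ℝ) ≤ (Sc.card : ℝ) := by
          exact_mod_cast Finset.card_le_card hsub
      _ ≤ γ * δ * Δ := hSc
  -- rows of B2 vanish
  have hB2zero : ∀ i, (fun j => B2 i j) = 0 := by
    intro i
    refine keyB _ (hB2 i) ?_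
    have he : (fun j => B2 i j) = (fun j => X i j) - (fun j => A2 i j) := by
      funext j
      have := hXA2B2 i j
      simp [Pi.sub_apply]
      linear_combination (norm := ring_nf) -this
    have h1 : hw (fun j => B2 i j) ≤
        hw (fun j => X i j) + hw (fun j => A2 i j) := by
      rw [he]; exact hw_sub_le _ _
    have h2 : (hw (fun j => X i j) : ℝ) ≤ w := hrow i
    have h3 := hA2row i
    have h4 : (hw (fun j => B2 i j) : ℝ) ≤
        (hw (fun j => X i j) : ℝ) + (hw (fun j => A2 i j) : ℝ) := by
      exact_mod_cast h1
    calc (hw (fun j => B2 i j) : ℝ) ≤ _ := h4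
      _ ≤ w + γ * δ * Δ := add_le_add h2 h3
      _ < δ * Δ := hwγ
  -- hence X = A2 and all columns of X are small codewords of CA
  have hXA2 : ∀ i j, X i j = A2 i j := by
    intro i j
    rw [hXA2B2 i j, congrFun (hB2zero i) j]
    simp
  have hXcol : ∀ j, (fun i => X i j) = 0 := by
    intro j
    have hm : (fun i => X i j) ∈ CA := by
      have he : (fun i => X i j) = (fun i => A2 i j) := by
        funext i; exact hXA2 i j
      rw [he]; exact hA2 j
    refine keyA _ hm ?_
    calc (hw (fun i => X i j) : ℝ) ≤ w := hcol j
      _ < δ * Δ := hwδ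
  ext i j
  simpa using congrFun (hXcol j) i
end
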